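/- Let K > 0 and let f(z) = z + ∑_{n≥2} b(n) z^n be holomorphic on the unit disc D = {|z| < 1} with |b(n)| ≤ K·n² for every n ≥ 2. Then for every r with 0 < r ≤ R₃(K), the image f({|z| < r}) is a convex subset of ℂ; here R₃(K) is the smallest root in (0,1) of the equation X⁵ − 5X⁴ + 11X³ + X² + 16X = (1−X)⁵/K. -/

import Mathlib

open Complex Filter Topology

noncomputable section

/-- `x` satisfies the quintic equation `X⁵ − 5X⁴ + 11X³ + X² + 16X = (1−X)⁵/K`. -/
def QuinticEq (K x : ℝ) : Prop :=
  x ^ 5 - 5 * x ^ 4 + 11 * x ^ 3 + x ^ 2 + 16 * x = (1 - x) ^ 5 / K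



def auxg (b : ℕ → ℂ) (z : ℂ) : ℂ := ∑' n : ℕ, b (n+2) * z^(n+2)
def auxG (b : ℕ → ℂ) (c : ℂ) : ℂ := ∑' n : ℕ, ((n+2:ℕ):ℂ) * b (n+2) * c^(n+1)

lemma aux_summable4 (r : ℝ) (hr0 : 0 < r) (hr1 : r < 1) :
    Summable (fun n : ℕ => ((n:ℝ)+2)^4 * r^n) := by
  have h : Summable (fun n : ℕ => (n:ℝ)^4 * r^n) :=
    summable_pow_mul_geometric_of_norm_lt_one 4
      (by rw [Real.norm_eq_abs, abs_of_pos hr0]; exact hr1)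
  have h2 : Summable (fun n : ℕ => ((n+2:ℕ):ℝ)^4 * r^(n+2)) :=
    (summable_nat_add_iff 2).mpr h
  have h3 := (h2.div_const (r^2))
  apply h3.congr
  intro n
  have hrr : r^(n+2) = r^n * r^2 := by ring
  push_cast
  field_simp [hrr]
  ring

lemma aux_sumA (r : ℝ) (hr0 : 0 < r) (hr1 : r < 1) :
    Summable (fun n : ℕ => ((n:ℝ)+2)^3 * r^(n+1)) := by
  have h4 := (aux_summable4 r hr0 hr1).mul_left r
  apply Summable.of_nonneg_of_le (fun n => by positivity) (fun n => ?_) h4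
  have h2 : ((n:ℝ)+2)^3 ≤ ((n:ℝ)+2)^4 := by
    have h0 : (0:ℝ) ≤ (n:ℝ)+2 := by positivity
    nlinarith [pow_nonneg h0 3]
  have h3 : (0:ℝ) ≤ r^n := by positivity
  calc ((n:ℝ)+2)^3 * r^(n+1) ≤ ((n:ℝ)+2)^4 * r^(n+1) :=
        mul_le_mul_of_nonneg_right h2 (by positivity)
    _ = r * (((n:ℝ)+2)^4 * r^n) := by ring

lemma aux_sumB (r : ℝ) (hr0 : 0 < r) (hr1 : r < 1) :
    Summable (fun n : ℕ => ((n:ℝ)+2)^3 * ((n:ℝ)+1) * r^n) := by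
  apply Summable.of_nonneg_of_le (fun n => by positivity) (fun n => ?_)
    (aux_summable4 r hr0 hr1)
  have h0 : (0:ℝ) ≤ (n:ℝ)+2 := by positivity
  have h2 : ((n:ℝ)+2)^3 * ((n:ℝ)+1) ≤ ((n:ℝ)+2)^4 := by
    nlinarith [pow_nonneg h0 3]
  exact mul_le_mul_of_nonneg_right h2 (by positivity)


lemma aux_pow_sub (r : ℝ) (hr : 0 ≤ r) :
    ∀ (m : ℕ) (z w : ℂ), ‖z‖ ≤ r → ‖w‖ ≤ r →
    ‖z ^ (m+1) - w ^ (m+1)‖ ≤ ((m:ℝ)+1) * r ^ m * ‖z - w‖ := by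
  intro m
  induction m with
  | zero => intro z w hz hw; simp
  | succ m ih =>
    intro z w hz hw
    have h1 : z ^ (m+1+1) - w ^ (m+1+1) = z ^ (m+1) * (z - w) + (z ^ (m+1) - w ^ (m+1)) * w := by
      ring
    have h2 : ‖z ^ (m+1) * (z - w)‖ ≤ r ^ (m+1) * ‖z - w‖ := by
      rw [norm_mul, norm_pow]
      exact mul_le_mul_of_nonneg_right (pow_le_pow_left₀ (norm_nonneg z) hz _) (norm_nonneg _)
    have h3 : ‖(z ^ (m+1) - w ^ (m+1)) * w‖ ≤ (((m:ℝ)+1) * r ^ m * ‖z - w‖) * r := by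
      rw [norm_mul]
      exact mul_le_mul (ih z w hz hw) hw (norm_nonneg _) (by positivity)
    calc ‖z ^ (m+1+1) - w ^ (m+1+1)‖
        ≤ ‖z ^ (m+1) * (z - w)‖ + ‖(z ^ (m+1) - w ^ (m+1)) * w‖ := by
          rw [h1]; exact norm_add_le _ _
      _ ≤ r ^ (m+1) * ‖z - w‖ + (((m:ℝ)+1) * r ^ m * ‖z - w‖) * r := add_le_add h2 h3
      _ = (((m+1:ℕ):ℝ)+1) * r ^ (m+1) * ‖z - w‖ := by push_cast; ring

lemma aux_taylor (r : ℝ) (hr : 0 ≤ r) :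
    ∀ (m : ℕ) (z c : ℂ), ‖z‖ ≤ r → ‖c‖ ≤ r →
    ‖z ^ (m+2) - c ^ (m+2) - ((m:ℂ)+2) * c ^ (m+1) * (z - c)‖
      ≤ ((m:ℝ)+2) * ((m:ℝ)+1) / 2 * r ^ m * ‖z - c‖ ^ 2 := by
  intro m
  induction m with
  | zero =>
    intro z c hz hc
    have h1 : z ^ (0+2) - c ^ (0+2) - (((0:ℕ):ℂ)+2) * c ^ (0+1) * (z - c) = (z - c) ^ 2 := by
      push_cast; ring
    rw [h1, norm_pow]
    norm_num
  | succ m ih =>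
    intro z c hz hc
    have h1 : z ^ (m+1+2) - c ^ (m+1+2) - (((m+1:ℕ):ℂ)+2) * c ^ (m+1+1) * (z - c)
        = z * (z ^ (m+2) - c ^ (m+2) - ((m:ℂ)+2) * c ^ (m+1) * (z - c))
          + ((m:ℂ)+2) * c ^ (m+1) * (z - c) ^ 2 := by push_cast; ring
    have h2 : ‖z * (z ^ (m+2) - c ^ (m+2) - ((m:ℂ)+2) * c ^ (m+1) * (z - c))‖
        ≤ r * (((m:ℝ)+2) * ((m:ℝ)+1) / 2 * r ^ m * ‖z - c‖ ^ 2) := by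
      rw [norm_mul]
      exact mul_le_mul hz (ih z c hz hc) (norm_nonneg _) hr
    have hnm : ‖((m:ℂ)+2)‖ = (m:ℝ)+2 := by
      have : ((m:ℂ)+2) = ((m+2:ℕ):ℂ) := by push_cast; ring
      rw [this, Complex.norm_natCast]; push_cast; ring
    have h3 : ‖((m:ℂ)+2) * c ^ (m+1) * (z - c) ^ 2‖ ≤ ((m:ℝ)+2) * r ^ (m+1) * ‖z - c‖ ^ 2 := by
      rw [norm_mul, norm_mul, norm_pow, norm_pow, hnm]
      have hcp : ‖c‖ ^ (m+1) ≤ r ^ (m+1) := pow_le_pow_left₀ (norm_nonneg c) hc _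
      exact mul_le_mul_of_nonneg_right
        (mul_le_mul_of_nonneg_left hcp (by positivity)) (sq_nonneg _)
    calc ‖z ^ (m+1+2) - c ^ (m+1+2) - (((m+1:ℕ):ℂ)+2) * c ^ (m+1+1) * (z - c)‖
        ≤ r * (((m:ℝ)+2) * ((m:ℝ)+1) / 2 * r ^ m * ‖z - c‖ ^ 2)
          + ((m:ℝ)+2) * r ^ (m+1) * ‖z - c‖ ^ 2 := by
          rw [h1]; exact le_trans (norm_add_le _ _) (add_le_add h2 h3)
      _ = (((m+1:ℕ):ℝ)+2) * (((m+1:ℕ):ℝ)+1) / 2 * r ^ (m+1) * ‖z - c‖ ^ 2 := by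
          push_cast; ring


-- closed forms
lemma aux_sum_pow4 (r : ℝ) (hr0 : 0 ≤ r) (hr1 : r < 1) :
    ∀ N : ℕ, (∑ n ∈ Finset.range N, ((n:ℝ)+1)^4 * r^n)
      + r^N * ( (N:ℝ)^4 * (1/(1-r)) + 4*(N:ℝ)^3*(1/(1-r)^2) + 6*(N:ℝ)^2*((1+r)/(1-r)^3)
        + 4*(N:ℝ)*((1+4*r+r^2)/(1-r)^4) + (1+11*r+11*r^2+r^3)/(1-r)^5 )
      = (1+11*r+11*r^2+r^3)/(1-r)^5 := by
  have h1r : (1:ℝ) - r ≠ 0 := by intro h; linarith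
  intro N
  induction N with
  | zero => simp
  | succ N ih =>
    rw [Finset.sum_range_succ]
    have hstep : r^N * ( (N:ℝ)^4 * (1/(1-r)) + 4*(N:ℝ)^3*(1/(1-r)^2) + 6*(N:ℝ)^2*((1+r)/(1-r)^3)
        + 4*(N:ℝ)*((1+4*r+r^2)/(1-r)^4) + (1+11*r+11*r^2+r^3)/(1-r)^5 )
      = ((N:ℝ)+1)^4 * r^N
        + r^(N+1) * ( ((N+1:ℕ):ℝ)^4 * (1/(1-r)) + 4*((N+1:ℕ):ℝ)^3*(1/(1-r)^2)
          + 6*((N+1:ℕ):ℝ)^2*((1+r)/(1-r)^3)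
          + 4*((N+1:ℕ):ℝ)*((1+4*r+r^2)/(1-r)^4) + (1+11*r+11*r^2+r^3)/(1-r)^5 ) := by
      push_cast
      field_simp
      ring
    push_cast at hstep ⊢
    linarith [ih]

lemma aux_T_le (r : ℝ) (hr0 : 0 < r) (hr1 : r < 1)
    (key : ∀ N : ℕ, (∑ n ∈ Finset.range N, ((n:ℝ)+1)^4 * r^n)
      + r^N * ( (N:ℝ)^4 * (1/(1-r)) + 4*(N:ℝ)^3*(1/(1-r)^2) + 6*(N:ℝ)^2*((1+r)/(1-r)^3)
        + 4*(N:ℝ)*((1+4*r+r^2)/(1-r)^4) + (1+11*r+11*r^2+r^3)/(1-r)^5 )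
      = (1+11*r+11*r^2+r^3)/(1-r)^5) :
    Summable (fun n : ℕ => ((n:ℝ)+1)^4 * r^n) ∧
    (∑' n : ℕ, ((n:ℝ)+1)^4 * r^n) ≤ (1+11*r+11*r^2+r^3)/(1-r)^5 := by
  have h1r : (0:ℝ) < 1 - r := by linarith
  have hsum : Summable (fun n : ℕ => ((n:ℝ)+1)^4 * r^n) := by
    apply Summable.of_nonneg_of_le (fun n => by positivity)
      (fun n => ?_) (aux_summable4 r hr0 hr1)
    have : ((n:ℝ)+1)^4 ≤ ((n:ℝ)+2)^4 := by
      apply pow_le_pow_left₀ (by positivity) (by linarith)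
    nlinarith [pow_nonneg hr0.le n]
  refine ⟨hsum, Summable.tsum_le_of_sum_range_le hsum fun N => ?_⟩
  have hc : 0 ≤ r^N * ( (N:ℝ)^4 * (1/(1-r)) + 4*(N:ℝ)^3*(1/(1-r)^2) + 6*(N:ℝ)^2*((1+r)/(1-r)^3)
        + 4*(N:ℝ)*((1+4*r+r^2)/(1-r)^4) + (1+11*r+11*r^2+r^3)/(1-r)^5 ) := by
    have h0 : (0:ℝ) ≤ (N:ℝ) := Nat.cast_nonneg N
    positivity
  linarith [key N]


lemma aux_quintic_mono (r R : ℝ) (hr0 : 0 < r) (hrR : r ≤ R) (hR1 : R < 1) :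
    r^5 - 5*r^4 + 11*r^3 + r^2 + 16*r ≤ R^5 - 5*R^4 + 11*R^3 + R^2 + 16*R := by
  have hR0 : 0 < R := lt_of_lt_of_le hr0 hrR
  have key : R^5 - 5*R^4 + 11*R^3 + R^2 + 16*R - (r^5 - 5*r^4 + 11*r^3 + r^2 + 16*r)
      = (R - r) * ((R^4 + R^3*r + R^2*r^2 + R*r^3 + r^4)
        - 5*(R^3 + R^2*r + R*r^2 + r^3) + 11*(R^2 + R*r + r^2) + (R + r) + 16) := by
    ring
  have hQ : 0 ≤ (R^4 + R^3*r + R^2*r^2 + R*r^3 + r^4)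
        - 5*(R^3 + R^2*r + R*r^2 + r^3) + 11*(R^2 + R*r + r^2) + (R + r) + 16 := by
    nlinarith [mul_nonneg (mul_nonneg hR0.le hR0.le) (sub_nonneg.2 hR1.le),
      mul_nonneg (mul_nonneg hR0.le hr0.le) (sub_nonneg.2 hR1.le),
      mul_nonneg (mul_nonneg hr0.le hr0.le) (sub_nonneg.2 hR1.le),
      sq_nonneg (R - r), sq_nonneg (R + r), mul_pos hr0 hR0,
      pow_nonneg hr0.le 2, pow_nonneg hR0.le 2]
  nlinarith [mul_nonneg (sub_nonneg.2 hrR) hQ]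

lemma aux_lip (K r : ℝ) (hK : 0 < K) (hr0 : 0 < r) (hr1 : r < 1) (b : ℕ → ℂ)
    (hb : ∀ n : ℕ, 2 ≤ n → ‖b n‖ ≤ K * (n:ℝ)^2)
    (hsum : ∀ z : ℂ, ‖z‖ ≤ r → Summable (fun n : ℕ => b (n+2) * z^(n+2)))
    (z w : ℂ) (hz : ‖z‖ ≤ r) (hw : ‖w‖ ≤ r) :
    ‖auxg b z - auxg b w‖ ≤ (K * ∑' n : ℕ, ((n:ℝ)+2)^3 * r^(n+1)) * ‖z - w‖ := by
  have h1 := hsum z hz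
  have h2 := hsum w hw
  have hS : HasSum (fun n : ℕ => b (n+2) * z^(n+2) - b (n+2) * w^(n+2)) (auxg b z - auxg b w) :=
    h1.hasSum.sub h2.hasSum
  have hterm : ∀ n : ℕ, ‖b (n+2) * z^(n+2) - b (n+2) * w^(n+2)‖
      ≤ (K * ‖z - w‖) * (((n:ℝ)+2)^3 * r^(n+1)) := by
    intro n
    rw [← mul_sub, norm_mul]
    have hp := aux_pow_sub r hr0.le (n+1) z w hz hw
    have hbb := hb (n+2) (by omega)
    calc ‖b (n+2)‖ * ‖z^(n+2) - w^(n+2)‖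
        ≤ (K * ((n+2:ℕ):ℝ)^2) * ((((n+1:ℕ):ℝ)+1) * r^(n+1) * ‖z - w‖) :=
          mul_le_mul hbb hp (norm_nonneg _) (by positivity)
      _ = (K * ‖z - w‖) * (((n:ℝ)+2)^3 * r^(n+1)) := by push_cast; ring
  have hnorm : Summable (fun n : ℕ => ‖b (n+2) * z^(n+2) - b (n+2) * w^(n+2)‖) :=
    Summable.of_nonneg_of_le (fun n => norm_nonneg _) hterm
      ((aux_sumA r hr0 hr1).mul_left (K * ‖z - w‖))
  calc ‖auxg b z - auxg b w‖
      = ‖∑' n : ℕ, (b (n+2) * z^(n+2) - b (n+2) * w^(n+2))‖ := by rw [hS.tsum_eq]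
    _ ≤ ∑' n : ℕ, ‖b (n+2) * z^(n+2) - b (n+2) * w^(n+2)‖ := norm_tsum_le_tsum_norm hnorm
    _ ≤ ∑' n : ℕ, (K * ‖z - w‖) * (((n:ℝ)+2)^3 * r^(n+1)) :=
        Summable.tsum_le_tsum hterm hnorm ((aux_sumA r hr0 hr1).mul_left (K * ‖z - w‖))
    _ = (K * ‖z - w‖) * ∑' n : ℕ, ((n:ℝ)+2)^3 * r^(n+1) := tsum_mul_left
    _ = (K * ∑' n : ℕ, ((n:ℝ)+2)^3 * r^(n+1)) * ‖z - w‖ := by ring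

lemma aux_Gsum (K r : ℝ) (hK : 0 < K) (hr0 : 0 < r) (hr1 : r < 1) (b : ℕ → ℂ)
    (hb : ∀ n : ℕ, 2 ≤ n → ‖b n‖ ≤ K * (n:ℝ)^2)
    (c : ℂ) (hc : ‖c‖ ≤ r) :
    Summable (fun n : ℕ => ((n+2:ℕ):ℂ) * b (n+2) * c^(n+1)) := by
  apply Summable.of_norm_bounded ((aux_sumA r hr0 hr1).mul_left K)
  intro n
  rw [norm_mul, norm_mul, Complex.norm_natCast, norm_pow]
  have hbb := hb (n+2) (by omega)
  have hcp : ‖c‖^(n+1) ≤ r^(n+1) := pow_le_pow_left₀ (norm_nonneg c) hc _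
  calc ((n+2:ℕ):ℝ) * ‖b (n+2)‖ * ‖c‖^(n+1)
      ≤ ((n+2:ℕ):ℝ) * (K * ((n+2:ℕ):ℝ)^2) * r^(n+1) := by
        apply mul_le_mul (mul_le_mul_of_nonneg_left hbb (by positivity)) hcp
          (by positivity) (by positivity)
    _ = K * (((n:ℝ)+2)^3 * r^(n+1)) := by push_cast; ring

lemma aux_tay (K r : ℝ) (hK : 0 < K) (hr0 : 0 < r) (hr1 : r < 1) (b : ℕ → ℂ)
    (hb : ∀ n : ℕ, 2 ≤ n → ‖b n‖ ≤ K * (n:ℝ)^2)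
    (hsum : ∀ z : ℂ, ‖z‖ ≤ r → Summable (fun n : ℕ => b (n+2) * z^(n+2)))
    (z c : ℂ) (hz : ‖z‖ ≤ r) (hc : ‖c‖ ≤ r) :
    ‖auxg b z - auxg b c - auxG b c * (z - c)‖
      ≤ (K * ∑' n : ℕ, ((n:ℝ)+2)^3 * ((n:ℝ)+1) * r^n) / 2 * ‖z - c‖^2 := by
  have hS : HasSum (fun n : ℕ =>
      b (n+2) * z^(n+2) - b (n+2) * c^(n+2) - ((n+2:ℕ):ℂ) * b (n+2) * c^(n+1) * (z - c))
      (auxg b z - auxg b c - auxG b c * (z - c)) :=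
    ((hsum z hz).hasSum.sub (hsum c hc).hasSum).sub
      ((aux_Gsum K r hK hr0 hr1 b hb c hc).hasSum.mul_right (z - c))
  have hterm : ∀ n : ℕ, ‖b (n+2) * z^(n+2) - b (n+2) * c^(n+2)
        - ((n+2:ℕ):ℂ) * b (n+2) * c^(n+1) * (z - c)‖
      ≤ (K / 2 * ‖z - c‖^2) * (((n:ℝ)+2)^3 * ((n:ℝ)+1) * r^n) := by
    intro n
    have hfac : b (n+2) * z^(n+2) - b (n+2) * c^(n+2)
          - ((n+2:ℕ):ℂ) * b (n+2) * c^(n+1) * (z - c)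
        = b (n+2) * (z^(n+2) - c^(n+2) - ((n:ℂ)+2) * c^(n+1) * (z - c)) := by
      push_cast; ring
    rw [hfac, norm_mul]
    have ht := aux_taylor r hr0.le n z c hz hc
    have hbb := hb (n+2) (by omega)
    calc ‖b (n+2)‖ * ‖z^(n+2) - c^(n+2) - ((n:ℂ)+2) * c^(n+1) * (z - c)‖
        ≤ (K * ((n+2:ℕ):ℝ)^2) * (((n:ℝ)+2) * ((n:ℝ)+1) / 2 * r^n * ‖z - c‖^2) :=
          mul_le_mul hbb ht (norm_nonneg _) (by positivity)
      _ = (K / 2 * ‖z - c‖^2) * (((n:ℝ)+2)^3 * ((n:ℝ)+1) * r^n) := by push_cast; ring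
  have hnorm : Summable (fun n : ℕ => ‖b (n+2) * z^(n+2) - b (n+2) * c^(n+2)
        - ((n+2:ℕ):ℂ) * b (n+2) * c^(n+1) * (z - c)‖) :=
    Summable.of_nonneg_of_le (fun n => norm_nonneg _) hterm
      ((aux_sumB r hr0 hr1).mul_left (K / 2 * ‖z - c‖^2))
  calc ‖auxg b z - auxg b c - auxG b c * (z - c)‖
      = ‖∑' n : ℕ, (b (n+2) * z^(n+2) - b (n+2) * c^(n+2)
          - ((n+2:ℕ):ℂ) * b (n+2) * c^(n+1) * (z - c))‖ := by rw [hS.tsum_eq]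
    _ ≤ ∑' n : ℕ, ‖b (n+2) * z^(n+2) - b (n+2) * c^(n+2)
          - ((n+2:ℕ):ℂ) * b (n+2) * c^(n+1) * (z - c)‖ := norm_tsum_le_tsum_norm hnorm
    _ ≤ ∑' n : ℕ, (K / 2 * ‖z - c‖^2) * (((n:ℝ)+2)^3 * ((n:ℝ)+1) * r^n) :=
        Summable.tsum_le_tsum hterm hnorm ((aux_sumB r hr0 hr1).mul_left (K / 2 * ‖z - c‖^2))
    _ = (K / 2 * ‖z - c‖^2) * ∑' n : ℕ, ((n:ℝ)+2)^3 * ((n:ℝ)+1) * r^n := tsum_mul_left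
    _ = (K * ∑' n : ℕ, ((n:ℝ)+2)^3 * ((n:ℝ)+1) * r^n) / 2 * ‖z - c‖^2 := by ring


lemma aux_surj (r A : ℝ) (hr0 : 0 < r) (hA0 : 0 ≤ A) (hA1 : A < 1) (g : ℂ → ℂ)
    (hLip : ∀ z w : ℂ, ‖z‖ ≤ r → ‖w‖ ≤ r → ‖g z - g w‖ ≤ A * ‖z - w‖)
    (c w : ℂ) (hc : ‖c‖ < r) (hw : ‖w - (c + g c)‖ < (1-A)*(r - ‖c‖)) :
    ∃ z : ℂ, ‖z‖ < r ∧ z + g z = w := by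
  have h1A : 0 < 1 - A := by linarith
  set ρ := ‖w - (c + g c)‖ / (1-A) with hρdef
  have hρ0 : 0 ≤ ρ := div_nonneg (norm_nonneg _) h1A.le
  have hρr : ρ < r - ‖c‖ := by
    rw [hρdef, div_lt_iff₀ h1A]
    linarith [hw]
  have hwc : ‖w - (c + g c)‖ = (1-A)*ρ := by
    rw [hρdef]; field_simp
  have hin : ∀ z : ℂ, z ∈ Metric.closedBall c ρ → ‖z‖ ≤ r := by
    intro z hzc
    rw [Metric.mem_closedBall, dist_eq_norm] at hzc
    have h := norm_add_le c (z - c)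
    rw [add_sub_cancel] at h
    linarith
  haveI : Nonempty (Metric.closedBall c ρ) := ⟨⟨c, Metric.mem_closedBall_self hρ0⟩⟩
  haveI : CompleteSpace (Metric.closedBall c ρ) :=
    (Metric.isClosed_closedBall).completeSpace_coe
  have hmem : ∀ z : Metric.closedBall c ρ, (w - g ↑z) ∈ Metric.closedBall c ρ := by
    intro z
    rw [Metric.mem_closedBall, dist_eq_norm]
    have hz2 := z.2
    rw [Metric.mem_closedBall, dist_eq_norm] at hz2
    have hl : ‖g c - g ↑z‖ ≤ A * ‖c - ↑z‖ := hLip c ↑z hc.le (hin _ z.2)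
    have hcz : ‖c - (↑z:ℂ)‖ = ‖(↑z:ℂ) - c‖ := norm_sub_rev _ _
    have he : (w - g ↑z) - c = (w - (c + g c)) + (g c - g ↑z) := by ring
    calc ‖(w - g ↑z) - c‖ = ‖(w - (c + g c)) + (g c - g ↑z)‖ := by rw [he]
      _ ≤ ‖w - (c + g c)‖ + ‖g c - g ↑z‖ := norm_add_le _ _
      _ ≤ (1-A)*ρ + A * ρ := by
          rw [hwc]
          have : A * ‖c - (↑z:ℂ)‖ ≤ A * ρ := by
            rw [hcz]; exact mul_le_mul_of_nonneg_left hz2 hA0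
          linarith [hl.trans this]
      _ = ρ := by ring
  set T : Metric.closedBall c ρ → Metric.closedBall c ρ :=
    fun z => ⟨w - g ↑z, hmem z⟩ with hT
  have hcontr : ContractingWith ⟨A, hA0⟩ T := by
    constructor
    · exact_mod_cast hA1
    · apply LipschitzWith.of_dist_le_mul
      intro x y
      simp only [Subtype.dist_eq, hT, NNReal.coe_mk]
      rw [dist_eq_norm, dist_eq_norm]
      have he : (w - g ↑x) - (w - g ↑y) = g ↑y - g ↑x := by ring
      rw [he]
      have := hLip ↑y ↑x (hin _ y.2) (hin _ x.2)
      calc ‖g ↑y - g ↑x‖ ≤ A * ‖(↑y:ℂ) - ↑x‖ := this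
        _ = A * ‖(↑x:ℂ) - ↑y‖ := by rw [norm_sub_rev]
        _ = _ := rfl
  set z := ContractingWith.fixedPoint T hcontr with hzdef
  have hfix : T z = z := hcontr.fixedPoint_isFixedPt
  have hval : w - g ↑z = ↑z := congrArg Subtype.val hfix
  refine ⟨↑z, ?_, by linear_combination -hval⟩
  have hz2 := z.2
  rw [Metric.mem_closedBall, dist_eq_norm] at hz2
  have h := norm_add_le c ((↑z:ℂ) - c)
  rw [add_sub_cancel] at h
  linarith

lemma aux_norm_combo (a a' : ℝ) (h : a + a' = 1) (z1 z2 : ℂ) :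
    ‖(a:ℂ)*z1 + (a':ℂ)*z2‖^2 = a*‖z1‖^2 + a'*‖z2‖^2 - a*a'*‖z1-z2‖^2 := by
  have ha' : a' = 1 - a := by linarith
  subst ha'
  simp only [Complex.sq_norm, Complex.normSq_apply, Complex.add_re,
    Complex.add_im, Complex.mul_re, Complex.mul_im, Complex.ofReal_re, Complex.ofReal_im,
    Complex.sub_re, Complex.sub_im]
  ring

set_option maxHeartbeats 2000000 in
/-- **Proposition (radius of convexity).** If `f(z) = z + ∑_{n ≥ 2} b(n) zⁿ` is holomorphic
on the unit disc with `|b(n)| ≤ K n²` for `n ≥ 2`, and `R₃` is the smallest root in `(0,1)`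
of `X⁵ − 5X⁴ + 11X³ + X² + 16X = (1−X)⁵/K`, then `f({|z| < r})` is convex for every
`0 < r ≤ R₃`. -/
theorem stmt8 (K : ℝ) (hK : 0 < K) (f : ℂ → ℂ) (b : ℕ → ℂ)
    (hb0 : b 0 = 0) (hb1 : b 1 = 1)
    (hb : ∀ n : ℕ, 2 ≤ n → ‖b n‖ ≤ K * (n : ℝ) ^ 2)
    (hf : ∀ z ∈ Metric.ball (0 : ℂ) 1, HasSum (fun n : ℕ => b n * z ^ n) (f z))
    (R₃ : ℝ) (hR₃mem : R₃ ∈ Set.Ioo (0 : ℝ) 1) (hR₃eq : QuinticEq K R₃)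
    (hR₃min : ∀ x ∈ Set.Ioo (0 : ℝ) 1, QuinticEq K x → R₃ ≤ x) :
    ∀ r : ℝ, 0 < r → r ≤ R₃ → Convex ℝ (f '' Metric.ball (0 : ℂ) r) := by
  intro r hr0 hrR
  obtain ⟨hR0, hR1⟩ := hR₃mem
  have hr1 : r < 1 := lt_of_le_of_lt hrR hR1
  have h1r : (0:ℝ) < 1 - r := by linarith
  -- tail series of f
  have hfg : ∀ z : ℂ, ‖z‖ < 1 → HasSum (fun n : ℕ => b (n+2) * z^(n+2)) (f z - z) := by
    intro z hz
    have hz1 : z ∈ Metric.ball (0:ℂ) 1 := by rwa [Metric.mem_ball, dist_zero_right]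
    have h := hf z hz1
    apply (hasSum_nat_add_iff (f := fun n : ℕ => b n * z^n) 2).mpr
    have hsum2 : (∑ i ∈ Finset.range 2, b i * z ^ i) = z := by
      rw [Finset.sum_range_succ, Finset.sum_range_one, hb0, hb1]
      simp
    rw [hsum2]
    simpa using h
  have hgz : ∀ z : ℂ, ‖z‖ < 1 → f z = z + auxg b z := by
    intro z hz
    have := (hfg z hz).tsum_eq
    rw [auxg, this]
    ring
  have hgsum : ∀ z : ℂ, ‖z‖ ≤ r → Summable (fun n : ℕ => b (n+2) * z^(n+2)) :=
    fun z hz => (hfg z (lt_of_le_of_lt hz hr1)).summable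
  -- the key numerical bound : A + B * r ≤ 1
  set A : ℝ := K * ∑' n : ℕ, ((n:ℝ)+2)^3 * r^(n+1) with hAdef
  set B : ℝ := K * ∑' n : ℕ, ((n:ℝ)+2)^3 * ((n:ℝ)+1) * r^n with hBdef
  have sumA := aux_sumA r hr0 hr1
  have sumB := aux_sumB r hr0 hr1
  obtain ⟨sumT, hTle⟩ := aux_T_le r hr0 hr1 (aux_sum_pow4 r hr0.le hr1)
  -- shift identity
  have hshift : (∑' n : ℕ, ((n:ℝ)+1)^4 * r^n)
      = 1 + ∑' n : ℕ, ((n:ℝ)+2)^4 * r^(n+1) := by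
    rw [Summable.tsum_eq_zero_add sumT]
    norm_num
    apply tsum_congr
    intro n
    push_cast
    ring
  have sum4' : Summable (fun n : ℕ => ((n:ℝ)+2)^4 * r^(n+1)) := by
    apply ((aux_summable4 r hr0 hr1).mul_left r).congr
    intro n; ring
  have hABsum : A + B * r = K * ∑' n : ℕ, ((n:ℝ)+2)^4 * r^(n+1) := by
    rw [hAdef, hBdef]
    have h1 : (∑' n : ℕ, ((n:ℝ)+2)^3 * ((n:ℝ)+1) * r^n) * r
        = ∑' n : ℕ, ((n:ℝ)+2)^3 * ((n:ℝ)+1) * r^(n+1) := by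
      rw [← tsum_mul_right]
      apply tsum_congr; intro n; ring
    have h2 : (∑' n : ℕ, ((n:ℝ)+2)^3 * r^(n+1))
        + ∑' n : ℕ, ((n:ℝ)+2)^3 * ((n:ℝ)+1) * r^(n+1)
        = ∑' n : ℕ, ((n:ℝ)+2)^4 * r^(n+1) := by
      rw [← Summable.tsum_add sumA (by
        apply (sumB.mul_right r).congr
        intro n; ring)]
      apply tsum_congr; intro n; ring
    calc K * (∑' n : ℕ, ((n:ℝ)+2)^3 * r^(n+1))
        + K * (∑' n : ℕ, ((n:ℝ)+2)^3 * ((n:ℝ)+1) * r^n) * r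
        = K * ((∑' n : ℕ, ((n:ℝ)+2)^3 * r^(n+1))
          + (∑' n : ℕ, ((n:ℝ)+2)^3 * ((n:ℝ)+1) * r^n) * r) := by ring
      _ = K * ∑' n : ℕ, ((n:ℝ)+2)^4 * r^(n+1) := by rw [h1, h2]
  -- quintic bound
  have hPr : r^5 - 5*r^4 + 11*r^3 + r^2 + 16*r ≤ (1-r)^5 / K := by
    have h1 := aux_quintic_mono r R₃ hr0 hrR hR1
    have h2 : (1-R₃)^5 ≤ (1-r)^5 :=
      pow_le_pow_left₀ (by linarith) (by linarith) 5
    have h3 : R₃^5 - 5*R₃^4 + 11*R₃^3 + R₃^2 + 16*R₃ = (1-R₃)^5 / K := by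
      have := hR₃eq
      rw [QuinticEq] at this
      linarith [this]
    have h4 : (1-R₃)^5 / K ≤ (1-r)^5 / K :=
      div_le_div_of_nonneg_right h2 hK.le
    linarith
  have hAB1 : A + B * r ≤ 1 := by
    rw [hABsum]
    have hg4 : (1+11*r+11*r^2+r^3)/(1-r)^5 - 1
        = (r^5 - 5*r^4 + 11*r^3 + r^2 + 16*r) / (1-r)^5 := by
      field_simp
      ring
    have h5 : (∑' n : ℕ, ((n:ℝ)+2)^4 * r^(n+1))
        ≤ (r^5 - 5*r^4 + 11*r^3 + r^2 + 16*r) / (1-r)^5 := by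
      rw [← hg4]
      linarith [hTle, hshift]
    have h6 : K * ((r^5 - 5*r^4 + 11*r^3 + r^2 + 16*r) / (1-r)^5) ≤ 1 := by
      rw [mul_div_assoc'] -- maybe
      rw [div_le_one (by positivity)]
      have := (le_div_iff₀ hK).mp hPr
      linarith
    calc K * (∑' n : ℕ, ((n:ℝ)+2)^4 * r^(n+1))
        ≤ K * ((r^5 - 5*r^4 + 11*r^3 + r^2 + 16*r) / (1-r)^5) :=
          mul_le_mul_of_nonneg_left h5 hK.le
      _ ≤ 1 := h6
  have hA0 : 0 ≤ A := mul_nonneg hK.le (tsum_nonneg fun n => by positivity)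
  have hB8 : (8:ℝ) ≤ ∑' n : ℕ, ((n:ℝ)+2)^3 * ((n:ℝ)+1) * r^n := by
    have := Summable.le_tsum sumB 0 (fun j _ => by positivity)
    norm_num at this
    linarith
  have hBr : 0 < B * r := by
    apply mul_pos (lt_of_lt_of_le (by positivity) _) hr0
    rw [hBdef]
    nlinarith [hB8]
  have hA1 : A < 1 := by linarith
  -- Lipschitz and Taylor for auxg
  have hLip : ∀ z w : ℂ, ‖z‖ ≤ r → ‖w‖ ≤ r → ‖auxg b z - auxg b w‖ ≤ A * ‖z - w‖ :=
    fun z w hz hw => aux_lip K r hK hr0 hr1 b hb hgsum z w hz hw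
  have hTay : ∀ z c : ℂ, ‖z‖ ≤ r → ‖c‖ ≤ r →
      ‖auxg b z - auxg b c - auxG b c * (z - c)‖ ≤ B / 2 * ‖z - c‖^2 :=
    fun z c hz hc => aux_tay K r hK hr0 hr1 b hb hgsum z c hz hc
  clear_value A B
  -- convexity
  rw [convex_iff_forall_pos]
  rintro x ⟨z1, hz1m, rfl⟩ y ⟨z2, hz2m, rfl⟩ a a' ha ha' haa
  rw [Metric.mem_ball, dist_zero_right] at hz1m hz2m
  simp only [Complex.real_smul]
  by_cases hzz : z1 = z2
  · subst hzz
    refine ⟨z1, by rwa [Metric.mem_ball, dist_zero_right], ?_⟩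
    have : ((a:ℂ) + (a':ℂ)) * f z1 = f z1 := by
      have h : ((a:ℂ) + (a':ℂ)) = 1 := by exact_mod_cast congrArg (Complex.ofReal) haa
      rw [h, one_mul]
    linear_combination -this
  · have hα : (a:ℂ) + (a':ℂ) = 1 := by exact_mod_cast congrArg (Complex.ofReal) haa
    set c : ℂ := (a:ℂ)*z1 + (a':ℂ)*z2 with hcdef
    clear_value c
    set d : ℝ := ‖z1 - z2‖ with hddef
    clear_value d
    have hd0 : 0 < d := by
      rw [hddef]
      exact norm_pos_iff.mpr (sub_ne_zero.mpr hzz)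
    have hc2 : ‖c‖^2 = a*‖z1‖^2 + a'*‖z2‖^2 - a*a'*d^2 := by
      rw [hcdef, hddef]; exact aux_norm_combo a a' haa z1 z2
    have hsq1 : ‖z1‖^2 < r^2 := by nlinarith [norm_nonneg z1]
    have hsq2 : ‖z2‖^2 < r^2 := by nlinarith [norm_nonneg z2]
    have hclt : ‖c‖^2 < r^2 - a*a'*d^2 := by
      have hm1 := mul_lt_mul_of_pos_left hsq1 ha
      have hm2 := mul_lt_mul_of_pos_left hsq2 ha'
      have hm3 : a*r^2 + a'*r^2 = r^2 := by linear_combination r^2 * haa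
      linarith [hc2]
    have hcr : ‖c‖ < r := by
      have hτ : 0 < a*a'*d^2 := by positivity
      have h2 : ‖c‖^2 < r^2 := by linarith
      exact lt_of_pow_lt_pow_left₀ 2 hr0.le h2
    have hgap : a*a'*d^2/(2*r) < r - ‖c‖ := by
      rw [div_lt_iff₀ (by positivity)]
      have hexp : (r - ‖c‖)^2 = r^2 - 2*r*‖c‖ + ‖c‖^2 := by ring
      have hsq' : 0 ≤ r^2 - 2*r*‖c‖ + ‖c‖^2 := hexp ▸ sq_nonneg (r - ‖c‖)
      have heq : (r - ‖c‖)*(2*r) = 2*r^2 - 2*r*‖c‖ := by ring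
      linarith
    -- w and its distance to f c
    have hfz1 : f z1 = z1 + auxg b z1 := hgz z1 (lt_trans hz1m hr1)
    have hfz2 : f z2 = z2 + auxg b z2 := hgz z2 (lt_trans hz2m hr1)
    set w : ℂ := (a:ℂ)*(f z1) + (a':ℂ)*(f z2) with hwdef
    clear_value w
    have hz1c : z1 - c = (a':ℂ)*(z1 - z2) := by
      rw [hcdef]; linear_combination (-z1) * hα
    have hz2c : z2 - c = -((a:ℂ)*(z1 - z2)) := by
      rw [hcdef]; linear_combination (-z2) * hα
    have hkey : w - (c + auxg b c)
        = (a:ℂ)*(auxg b z1 - auxg b c - auxG b c * (z1 - c))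
          + (a':ℂ)*(auxg b z2 - auxg b c - auxG b c * (z2 - c)) := by
      rw [hwdef, hfz1, hfz2, hz1c, hz2c]
      linear_combination (-1:ℂ)*hcdef + (auxg b c)*hα
    have hcrle : ‖c‖ ≤ r := hcr.le
    have hT1 := hTay z1 c hz1m.le hcrle
    have hT2 := hTay z2 c hz2m.le hcrle
    have hn1 : ‖z1 - c‖ = a' * d := by
      rw [hz1c, norm_mul, Complex.norm_real, Real.norm_eq_abs, abs_of_pos ha', hddef]
    have hn2 : ‖z2 - c‖ = a * d := by
      rw [hz2c, norm_neg, norm_mul, Complex.norm_real, Real.norm_eq_abs, abs_of_pos ha, hddef]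
    have hB0 : 0 ≤ B := by
      rw [hBdef]; exact mul_nonneg hK.le (tsum_nonneg fun n => by positivity)
    have hwbound : ‖w - (c + auxg b c)‖ < (1 - A) * (r - ‖c‖) := by
      have h1 : ‖w - (c + auxg b c)‖
          ≤ a * (B/2 * (a'*d)^2) + a' * (B/2 * (a*d)^2) := by
        rw [hkey]
        calc ‖(a:ℂ)*(auxg b z1 - auxg b c - auxG b c * (z1 - c))
              + (a':ℂ)*(auxg b z2 - auxg b c - auxG b c * (z2 - c))‖
            ≤ ‖(a:ℂ)‖*‖auxg b z1 - auxg b c - auxG b c * (z1 - c)‖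
              + ‖(a':ℂ)‖*‖auxg b z2 - auxg b c - auxG b c * (z2 - c)‖ := by
              refine le_trans (norm_add_le _ _) ?_
              rw [norm_mul, norm_mul]
          _ ≤ a * (B/2 * (a'*d)^2) + a' * (B/2 * (a*d)^2) := by
              have ha1 : ‖(a:ℂ)‖ = a := by
                rw [Complex.norm_real, Real.norm_eq_abs, abs_of_pos ha]
              have ha2 : ‖(a':ℂ)‖ = a' := by
                rw [Complex.norm_real, Real.norm_eq_abs, abs_of_pos ha']
              rw [ha1, ha2, ← hn1, ← hn2]
              exact add_le_add (mul_le_mul_of_nonneg_left hT1 ha.le)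
                (mul_le_mul_of_nonneg_left hT2 ha'.le)
      have h2 : a * (B/2 * (a'*d)^2) + a' * (B/2 * (a*d)^2) = B/2 * (a*a'*d^2) := by
        linear_combination (B/2 * a * a' * d^2) * haa
      have h3 : B/2 * (a*a'*d^2) = (B*r) * (a*a'*d^2/(2*r)) := by
        field_simp
      have h4 : (B*r) * (a*a'*d^2/(2*r)) ≤ (1-A) * (a*a'*d^2/(2*r)) := by
        apply mul_le_mul_of_nonneg_right (by linarith) (by positivity)
      have h5 : (1-A) * (a*a'*d^2/(2*r)) < (1-A) * (r - ‖c‖) :=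
        mul_lt_mul_of_pos_left hgap (by linarith)
      linarith [h1]
    obtain ⟨z, hzr, hzw⟩ := aux_surj r A hr0 hA0 hA1 (auxg b) hLip c w hcr hwbound
    refine ⟨z, by rwa [Metric.mem_ball, dist_zero_right], ?_⟩
    rw [hgz z (lt_trans hzr hr1), hzw]
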